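/- Fix a triple (σ,τ₀,τ₁) of permutations in S₃ and a purely periodic sequence i : ℕ → {0,1} with period p ≥ 1 (i_{m+p} = i_m for all m). Let N = (B·F_{i₀}·F_{i₁}⋯F_{i_{p−1}}·B⁻¹)². Then the intersection Δ(i₀,i₁,…) contains a line segment of positive length if and only if there exist two distinct points p₁, p₂ in the closed triangle Δ̄ = {(x,y) ∈ ℝ² : 0 ≤ y ≤ x ≤ 1} and real numbers λ₁, λ₂ such that N·(1,p₁)ᵀ = λ₁·(1,p₁)ᵀ and N·(1,p₂)ᵀ = λ₂·(1,p₂)ᵀ, where (1,p) denotes the column vector in ℝ³ obtained by prepending 1 to the coordinates of p. -/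

import Mathlib

open Matrix

noncomputable section

/-- `A₀ = ![![0,0,1],![1,0,0],![0,1,1]]`. -/
def A0 : Matrix (Fin 3) (Fin 3) ℝ := !![0,0,1; 1,0,0; 0,1,1]
/-- `A₁ = ![![1,0,1],![0,1,0],![0,0,1]]`. -/
def A1 : Matrix (Fin 3) (Fin 3) ℝ := !![1,0,1; 0,1,0; 0,0,1]
/-- `B = ![![1,1,1],![0,1,1],![0,0,1]]`. -/
def Bm : Matrix (Fin 3) (Fin 3) ℝ := !![1,1,1; 0,1,1; 0,0,1]

/-- The permutation matrix of `ρ`: entry `(i,j)` is `1` iff `ρ i = j`.  In particular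
`P (finRotate 3)`, the matrix of the cycle `(1 2 3)`, is `![![0,1,0],![0,0,1],![1,0,0]]`. -/
def P (ρ : Equiv.Perm (Fin 3)) : Matrix (Fin 3) (Fin 3) ℝ := ρ.permMatrix ℝ

/-- The pair of TRIP matrices `F₀ = P_σ·A₀·P_{τ₀}`, `F₁ = P_σ·A₁·P_{τ₁}` of a triple
of permutations, as a function `Fin 2 → Matrix`. -/
def Fmat (σ τ0 τ1 : Equiv.Perm (Fin 3)) : Fin 2 → Matrix (Fin 3) (Fin 3) ℝ :=
  ![P σ * A0 * P τ0, P σ * A1 * P τ1]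

/-- `prodMat G n = B · (G 0) · (G 1) ⋯ (G n)`. -/
def prodMat (G : ℕ → Matrix (Fin 3) (Fin 3) ℝ) (n : ℕ) : Matrix (Fin 3) (Fin 3) ℝ :=
  Bm * ((List.range (n+1)).map G).prod

/-- The triangle `Δ(i₀,…,iₙ)`: the convex hull of the images under
`π(x₀,x₁,x₂) = (x₁/x₀, x₂/x₀)` of the three columns of `M`. -/
def tri (M : Matrix (Fin 3) (Fin 3) ℝ) : Set (ℝ × ℝ) :=
  convexHull ℝ {p | ∃ j : Fin 3, p = (M 1 j / M 0 j, M 2 j / M 0 j)}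

/-- `Δ(i₀,i₁,…) = ⋂ₙ Δ(i₀,…,iₙ)`, for the sequence of matrices `G m = F_{i_m}`. -/
def DeltaInf (G : ℕ → Matrix (Fin 3) (Fin 3) ℝ) : Set (ℝ × ℝ) :=
  ⋂ n : ℕ, tri (prodMat G n)

namespace TripAux

abbrev M3 (α : Type) := Matrix (Fin 3) (Fin 3) α

/-! ### Casting from ℕ-matrices -/

def castM (X : M3 ℕ) : M3 ℝ := X.map (Nat.cast : ℕ → ℝ)

lemma castM_apply (X : M3 ℕ) (i j : Fin 3) : castM X i j = (X i j : ℝ) := rfl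

lemma castM_mul (X Y : M3 ℕ) : castM (X*Y) = castM X * castM Y := by
  have h : (Nat.cast : ℕ → ℝ) = ⇑(Nat.castRingHom ℝ) := rfl
  simp only [castM, h, Matrix.map_mul]

lemma castM_one : castM 1 = 1 := Matrix.map_one _ (by simp) (by simp)

lemma castM_pow (X : M3 ℕ) (k : ℕ) : castM (X^k) = (castM X)^k := by
  induction k with
  | zero => simpa using castM_one
  | succ k ih => rw [pow_succ, pow_succ, castM_mul, ih]

lemma castM_list_prod (l : List (M3 ℕ)) : castM l.prod = (l.map castM).prod := by
  induction l with
  | nil => simpa using castM_one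
  | cons a l ih => simp [castM_mul, ih]

lemma castM_inj {X Y : M3 ℕ} (h : castM X = castM Y) : X = Y := by
  ext i j
  have h2 : castM X i j = castM Y i j := congrFun (congrFun h i) j
  rw [castM_apply, castM_apply] at h2
  exact_mod_cast h2

/-! ### Row, column and total sums of ℕ-matrices -/

def rsum (X : M3 ℕ) (i : Fin 3) : ℕ := ∑ j, X i j
def csum (X : M3 ℕ) (j : Fin 3) : ℕ := ∑ i, X i j
def tsum (X : M3 ℕ) : ℕ := ∑ i, rsum X i

lemma tsum_eq_csum (X : M3 ℕ) : tsum X = ∑ j, csum X j := by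
  simp only [tsum, rsum, csum]; exact Finset.sum_comm

lemma rsum_mul (X Y : M3 ℕ) (i : Fin 3) : rsum (X*Y) i = ∑ k, X i k * rsum Y k := by
  simp only [rsum, Matrix.mul_apply, Finset.mul_sum]
  exact Finset.sum_comm

lemma csum_mul (X Y : M3 ℕ) (j : Fin 3) : csum (X*Y) j = ∑ k, csum X k * Y k j := by
  simp only [csum, Matrix.mul_apply, Finset.sum_mul]
  exact Finset.sum_comm

lemma tsum_mul (X Y : M3 ℕ) : tsum (X*Y) = ∑ k, csum X k * rsum Y k := by
  simp only [tsum, rsum_mul, Finset.mul_sum]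
  rw [Finset.sum_comm]
  simp only [csum, Finset.sum_mul]

lemma one_le_rsum_mul {X Y : M3 ℕ} (hX : ∀ i, 1 ≤ rsum X i) (hY : ∀ k, 1 ≤ rsum Y k) :
    ∀ i, 1 ≤ rsum (X*Y) i := by
  intro i
  rw [rsum_mul]
  calc 1 ≤ rsum X i := hX i
  _ = ∑ k, X i k * 1 := by simp [rsum]
  _ ≤ ∑ k, X i k * rsum Y k := Finset.sum_le_sum (fun k _ => Nat.mul_le_mul_left _ (hY k))

lemma one_le_csum_mul {X Y : M3 ℕ} (hX : ∀ k, 1 ≤ csum X k) (hY : ∀ j, 1 ≤ csum Y j) :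
    ∀ j, 1 ≤ csum (X*Y) j := by
  intro j
  rw [csum_mul]
  calc 1 ≤ csum Y j := hY j
  _ = ∑ k, 1 * Y k j := by simp [csum]
  _ ≤ ∑ k, csum X k * Y k j := Finset.sum_le_sum (fun k _ => Nat.mul_le_mul_right _ (hX k))

lemma tsum_le_mul_right {X Y : M3 ℕ} (hY : ∀ k, 1 ≤ rsum Y k) : tsum X ≤ tsum (X*Y) := by
  rw [tsum_mul, tsum_eq_csum]
  exact Finset.sum_le_sum (fun k _ => Nat.le_mul_of_pos_right _ (hY k))

lemma one_le_rsum_one : ∀ i, 1 ≤ rsum (1 : M3 ℕ) i := by decide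
lemma one_le_csum_one : ∀ j, 1 ≤ csum (1 : M3 ℕ) j := by decide
lemma tsum_one : tsum (1 : M3 ℕ) = 3 := by decide

lemma one_le_rsum_list_prod {l : List (M3 ℕ)} (h : ∀ X ∈ l, ∀ i, 1 ≤ rsum X i) :
    ∀ i, 1 ≤ rsum l.prod i := by
  induction l with
  | nil => simpa using one_le_rsum_one
  | cons a l ih =>
      rw [List.prod_cons]
      exact one_le_rsum_mul (h a (List.mem_cons_self))
        (ih (fun X hX => h X (List.mem_cons_of_mem a hX)))

lemma one_le_csum_list_prod {l : List (M3 ℕ)} (h : ∀ X ∈ l, ∀ j, 1 ≤ csum X j) :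
    ∀ j, 1 ≤ csum l.prod j := by
  induction l with
  | nil => simpa using one_le_csum_one
  | cons a l ih =>
      rw [List.prod_cons]
      exact one_le_csum_mul (h a (List.mem_cons_self))
        (ih (fun X hX => h X (List.mem_cons_of_mem a hX)))

/-! ### ℕ-versions of the TRIP matrices -/

def Pn (ρ : Equiv.Perm (Fin 3)) : M3 ℕ := ρ.permMatrix ℕ

lemma Pn_apply (ρ : Equiv.Perm (Fin 3)) (i j : Fin 3) :
    Pn ρ i j = if ρ i = j then 1 else 0 := by
  simp [Pn, Equiv.Perm.permMatrix, PEquiv.toMatrix_apply, Equiv.toPEquiv, eq_comm]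

lemma rsum_Pn (ρ : Equiv.Perm (Fin 3)) (i : Fin 3) : rsum (Pn ρ) i = 1 := by
  simp [rsum, Pn_apply]

lemma csum_Pn (ρ : Equiv.Perm (Fin 3)) (j : Fin 3) : csum (Pn ρ) j = 1 := by
  simp only [csum, Pn_apply]
  simp [Equiv.apply_eq_iff_eq_symm_apply]

lemma castM_Pn (ρ : Equiv.Perm (Fin 3)) : castM (Pn ρ) = P ρ := by
  ext i j
  simp [castM, Pn, P, Equiv.Perm.permMatrix, PEquiv.toMatrix_apply, Matrix.map_apply, apply_ite]

def A0n : M3 ℕ := !![0,0,1; 1,0,0; 0,1,1]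
def A1n : M3 ℕ := !![1,0,1; 0,1,0; 0,0,1]

lemma castM_A0n : castM A0n = A0 := by
  ext i j
  fin_cases i <;> fin_cases j <;>
    simp [castM, A0n, A0, Matrix.map_apply, Matrix.vecHead, Matrix.vecTail]

lemma castM_A1n : castM A1n = A1 := by
  ext i j
  fin_cases i <;> fin_cases j <;>
    simp [castM, A1n, A1, Matrix.map_apply, Matrix.vecHead, Matrix.vecTail]

lemma rsum_A0n : ∀ i, 1 ≤ rsum A0n i := by decide
lemma rsum_A1n : ∀ i, 1 ≤ rsum A1n i := by decide
lemma csum_A0n : ∀ j, 1 ≤ csum A0n j := by decide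
lemma csum_A1n : ∀ j, 1 ≤ csum A1n j := by decide
lemma tsum_A0n : tsum A0n = 4 := by decide
lemma tsum_A1n : tsum A1n = 4 := by decide

lemma one_le_rsum_Pn (ρ : Equiv.Perm (Fin 3)) : ∀ i, 1 ≤ rsum (Pn ρ) i :=
  fun i => (rsum_Pn ρ i).ge
lemma one_le_csum_Pn (ρ : Equiv.Perm (Fin 3)) : ∀ j, 1 ≤ csum (Pn ρ) j :=
  fun j => (csum_Pn ρ j).ge

lemma tsum_mul_Pn (X : M3 ℕ) (ρ : Equiv.Perm (Fin 3)) : tsum (X * Pn ρ) = tsum X := by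
  rw [tsum_mul, tsum_eq_csum]
  exact Finset.sum_congr rfl (fun k _ => by rw [rsum_Pn, mul_one])

lemma tsum_Pn_mul (ρ : Equiv.Perm (Fin 3)) (X : M3 ℕ) : tsum (Pn ρ * X) = tsum X := by
  rw [tsum_mul, tsum]
  exact Finset.sum_congr rfl (fun k _ => by rw [csum_Pn, one_mul])

def Fn (σ τ0 τ1 : Equiv.Perm (Fin 3)) : Fin 2 → M3 ℕ :=
  ![Pn σ * A0n * Pn τ0, Pn σ * A1n * Pn τ1]

lemma castM_Fn (σ τ0 τ1 : Equiv.Perm (Fin 3)) (d : Fin 2) :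
    castM (Fn σ τ0 τ1 d) = Fmat σ τ0 τ1 d := by
  fin_cases d <;>
    simp [Fn, Fmat, castM_mul, castM_Pn, castM_A0n, castM_A1n]

lemma one_le_rsum_Fn (σ τ0 τ1 : Equiv.Perm (Fin 3)) (d : Fin 2) :
    ∀ i, 1 ≤ rsum (Fn σ τ0 τ1 d) i := by
  fin_cases d <;>
    exact one_le_rsum_mul (one_le_rsum_mul (one_le_rsum_Pn _)
      (by first | exact rsum_A0n | exact rsum_A1n)) (one_le_rsum_Pn _)

lemma one_le_csum_Fn (σ τ0 τ1 : Equiv.Perm (Fin 3)) (d : Fin 2) :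
    ∀ j, 1 ≤ csum (Fn σ τ0 τ1 d) j := by
  fin_cases d <;>
    exact one_le_csum_mul (one_le_csum_mul (one_le_csum_Pn _)
      (by first | exact csum_A0n | exact csum_A1n)) (one_le_csum_Pn _)

lemma tsum_Fn (σ τ0 τ1 : Equiv.Perm (Fin 3)) (d : Fin 2) : tsum (Fn σ τ0 τ1 d) = 4 := by
  fin_cases d <;>
    simp [Fn, tsum_mul_Pn, tsum_Pn_mul, tsum_A0n, tsum_A1n]

/-! ### Determinants -/

lemma det_A0 : A0.det = 1 := by
  norm_num [A0, Matrix.det_fin_three, Matrix.vecHead, Matrix.vecTail, Matrix.cons_val_two]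
lemma det_A1 : A1.det = 1 := by
  norm_num [A1, Matrix.det_fin_three, Matrix.vecHead, Matrix.vecTail, Matrix.cons_val_two]
lemma det_Bm : Bm.det = 1 := by
  norm_num [Bm, Matrix.det_fin_three, Matrix.vecHead, Matrix.vecTail, Matrix.cons_val_two]

lemma isUnit_det_Bm : IsUnit Bm.det := by rw [det_Bm]; exact isUnit_one

lemma Bm_inv_mul : Bm⁻¹ * Bm = 1 := Matrix.nonsing_inv_mul _ isUnit_det_Bm
lemma Bm_mul_inv : Bm * Bm⁻¹ = 1 := Matrix.mul_nonsing_inv _ isUnit_det_Bm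

lemma abs_det_P (ρ : Equiv.Perm (Fin 3)) : |(P ρ).det| = 1 := by
  rw [P, Matrix.det_permutation]
  rcases Int.units_eq_one_or (Equiv.Perm.sign ρ) with h | h <;> rw [h] <;> norm_num

lemma abs_det_Fmat (σ τ0 τ1 : Equiv.Perm (Fin 3)) (d : Fin 2) :
    |(Fmat σ τ0 τ1 d).det| = 1 := by
  fin_cases d <;>
    simp [Fmat, Matrix.det_mul, abs_mul, abs_det_P, det_A0, det_A1]

lemma abs_det_list_prod {l : List (M3 ℝ)} (h : ∀ X ∈ l, |X.det| = 1) : |l.prod.det| = 1 := by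
  induction l with
  | nil => simp
  | cons a l ih =>
      rw [List.prod_cons, Matrix.det_mul, abs_mul, h a (List.mem_cons_self),
        ih (fun X hX => h X (List.mem_cons_of_mem a hX)), mul_one]

/-! ### Lifted membership in triangles -/

def vc (q : ℝ × ℝ) : Fin 3 → ℝ := ![1, q.1, q.2]

@[simp] lemma vc0 (q : ℝ × ℝ) : vc q 0 = 1 := rfl
@[simp] lemma vc1 (q : ℝ × ℝ) : vc q 1 = q.1 := rfl
@[simp] lemma vc2 (q : ℝ × ℝ) : vc q 2 = q.2 := rfl

lemma vc_inj {q q' : ℝ × ℝ} (h : vc q = vc q') : q = q' := by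
  have h1 : q.1 = q'.1 := by have := congrFun h 1; simpa using this
  have h2 : q.2 = q'.2 := by have := congrFun h 2; simpa using this
  exact Prod.ext h1 h2

/-- membership in `tri X` in terms of a nonnegative lift. -/
lemma mem_tri_iff (X : M3 ℝ) (hX : ∀ j, 0 < X 0 j) (q : ℝ × ℝ) :
    q ∈ tri X ↔ ∃ s : Fin 3 → ℝ, (∀ j, 0 ≤ s j) ∧ X *ᵥ s = vc q := by
  constructor
  · intro hq
    have hsub : {p : ℝ × ℝ | ∃ j : Fin 3, p = (X 1 j / X 0 j, X 2 j / X 0 j)} ⊆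
        {q : ℝ × ℝ | ∃ s : Fin 3 → ℝ, (∀ j, 0 ≤ s j) ∧ X *ᵥ s = vc q} := by
      rintro p ⟨j, rfl⟩
      have hXj := (hX j).ne'
      refine ⟨fun m => if m = j then (X 0 j)⁻¹ else 0, fun m => ?_, ?_⟩
      · by_cases h : m = j
        · simp [h, inv_nonneg.mpr (hX j).le]
        · simp [h]
      · have hv : ∀ m, (X *ᵥ fun l => if l = j then (X 0 j)⁻¹ else 0) m
            = X m j * (X 0 j)⁻¹ := by
          intro m
          simp [Matrix.mulVec, dotProduct, mul_ite]
        funext m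
        rw [hv]
        fin_cases m
        · show X 0 j * (X 0 j)⁻¹ = 1
          exact mul_inv_cancel₀ hXj
        · show X 1 j * (X 0 j)⁻¹ = X 1 j / X 0 j
          rw [div_eq_mul_inv]
        · show X 2 j * (X 0 j)⁻¹ = X 2 j / X 0 j
          rw [div_eq_mul_inv]
    have hconv : Convex ℝ {q : ℝ × ℝ | ∃ s : Fin 3 → ℝ, (∀ j, 0 ≤ s j) ∧ X *ᵥ s = vc q} := by
      rintro x ⟨s, hs, hXs⟩ y ⟨t, ht, hXt⟩ a b ha hb hab
      refine ⟨a • s + b • t, fun j => ?_, ?_⟩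
      · have h1 := mul_nonneg ha (hs j)
        have h2 := mul_nonneg hb (ht j)
        simp only [Pi.add_apply, Pi.smul_apply, smul_eq_mul]
        linarith
      · rw [Matrix.mulVec_add, Matrix.mulVec_smul, Matrix.mulVec_smul, hXs, hXt]
        funext m
        fin_cases m
        · show a * 1 + b * 1 = 1
          linarith
        · show a * x.1 + b * y.1 = (a • x + b • y).1
          simp [smul_eq_mul]
        · show a * x.2 + b * y.2 = (a • x + b • y).2
          simp [smul_eq_mul]
    exact convexHull_min hsub hconv hq
  · rintro ⟨s, hs, hXs⟩
    have h0 : ∑ j, s j * X 0 j = 1 := by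
      have := congrFun hXs 0
      simpa [Matrix.mulVec, dotProduct, mul_comm] using this
    have key : q = ∑ j : Fin 3, (s j * X 0 j) • ((X 1 j / X 0 j, X 2 j / X 0 j) : ℝ × ℝ) := by
      have h1 : q.1 = ∑ j, s j * X 1 j := by
        have := congrFun hXs 1
        simp only [Matrix.mulVec, dotProduct, vc1] at this
        rw [← this]; exact Finset.sum_congr rfl (fun j _ => mul_comm _ _)
      have h2 : q.2 = ∑ j, s j * X 2 j := by
        have := congrFun hXs 2
        simp only [Matrix.mulVec, dotProduct, vc2] at this
        rw [← this]; exact Finset.sum_congr rfl (fun j _ => mul_comm _ _)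
      apply Prod.ext
      · rw [Prod.fst_sum, h1]
        refine Finset.sum_congr rfl (fun j _ => ?_)
        have := (hX j).ne'
        simp [smul_eq_mul]
        field_simp
      · rw [Prod.snd_sum, h2]
        refine Finset.sum_congr rfl (fun j _ => ?_)
        have := (hX j).ne'
        simp [smul_eq_mul]
        field_simp
    rw [key]
    refine Convex.sum_mem (convex_convexHull ℝ _) (fun j _ => ?_) h0 (fun j _ => ?_)
    · have := hs j; have := (hX j).le; positivity
    · exact subset_convexHull ℝ _ ⟨j, rfl⟩

lemma Bm_pos_row0 : ∀ j, (0:ℝ) < Bm 0 j := by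
  intro j; fin_cases j <;> norm_num [Bm, Matrix.vecHead, Matrix.vecTail]

lemma mem_tri_Bm (q : ℝ × ℝ) :
    q ∈ tri Bm ↔ 0 ≤ q.2 ∧ q.2 ≤ q.1 ∧ q.1 ≤ 1 := by
  rw [mem_tri_iff Bm Bm_pos_row0]
  constructor
  · rintro ⟨s, hs, h⟩
    have h0 := congrFun h 0
    have h1 := congrFun h 1
    have h2 := congrFun h 2
    simp [Matrix.mulVec, dotProduct, Fin.sum_univ_three, Bm,
      Matrix.vecHead, Matrix.vecTail] at h0 h1 h2
    have hs0 := hs 0; have hs1 := hs 1; have hs2 := hs 2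
    refine ⟨by linarith, by linarith, by linarith⟩
  · rintro ⟨h1, h2, h3⟩
    refine ⟨![1 - q.1, q.1 - q.2, q.2], ?_, ?_⟩
    · intro j; fin_cases j <;> simp <;> linarith
    · funext m
      fin_cases m <;>
        simp [Matrix.mulVec, dotProduct, Fin.sum_univ_three, Bm, vc,
          Matrix.vecHead, Matrix.vecTail] <;> ring

/-- nesting: multiplying on the right by a nonnegative (cast) matrix shrinks the triangle -/
lemma tri_mul_subset (X : M3 ℝ) (Y : M3 ℕ) (hX : ∀ j, 0 < X 0 j)
    (hXY : ∀ j, 0 < (X * castM Y) 0 j) : tri (X * castM Y) ⊆ tri X := by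
  intro q hq
  rw [mem_tri_iff _ hXY] at hq
  rw [mem_tri_iff _ hX]
  obtain ⟨s, hs, h⟩ := hq
  refine ⟨castM Y *ᵥ s, ?_, ?_⟩
  · intro j
    show 0 ≤ ∑ k, castM Y j k * s k
    exact Finset.sum_nonneg fun k _ =>
      mul_nonneg (by rw [castM_apply]; exact_mod_cast Nat.zero_le _) (hs k)
  · rw [Matrix.mulVec_mulVec]; exact h

lemma tri_closed (X : M3 ℝ) : IsClosed (tri X) := by
  have hfin : {p : ℝ × ℝ | ∃ j : Fin 3, p = (X 1 j / X 0 j, X 2 j / X 0 j)}.Finite := by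
    have : {p : ℝ × ℝ | ∃ j : Fin 3, p = (X 1 j / X 0 j, X 2 j / X 0 j)}
        = Set.range (fun j : Fin 3 => ((X 1 j / X 0 j, X 2 j / X 0 j) : ℝ × ℝ)) := by
      ext r; simp [Set.range, eq_comm]
    rw [this]
    exact Set.finite_range _
  exact (hfin.isCompact_convexHull (𝕜 := ℝ)).isClosed

/-! ### General matrix helpers -/

lemma mulVec_cancel {M : M3 ℝ} (hM : IsUnit M.det) {x y : Fin 3 → ℝ}
    (h : M *ᵥ x = M *ᵥ y) : x = y := by
  have h2 := congrArg (fun v => M⁻¹ *ᵥ v) h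
  simpa [Matrix.mulVec_mulVec, Matrix.nonsing_inv_mul _ hM] using h2

/-! ### The projective action -/

def Tf (M : M3 ℝ) (q : ℝ × ℝ) : ℝ × ℝ :=
  ((M *ᵥ vc q) 1 / (M *ᵥ vc q) 0, (M *ᵥ vc q) 2 / (M *ᵥ vc q) 0)

lemma Tf_spec (M : M3 ℝ) (q : ℝ × ℝ) (h : 0 < (M *ᵥ vc q) 0) :
    M *ᵥ vc q = ((M *ᵥ vc q) 0) • vc (Tf M q) := by
  have hne := h.ne'
  funext m
  fin_cases m
  · show (M *ᵥ vc q) 0 = ((M *ᵥ vc q) 0) • (vc (Tf M q) 0)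
    simp
  · show (M *ᵥ vc q) 1 = ((M *ᵥ vc q) 0) • (vc (Tf M q) 1)
    simp only [vc1, Tf, smul_eq_mul]
    field_simp
  · show (M *ᵥ vc q) 2 = ((M *ᵥ vc q) 0) • (vc (Tf M q) 2)
    simp only [vc2, Tf, smul_eq_mul]
    field_simp

/-! ### Endpoints of segments -/

lemma seg_endpoints {u w x y : ℝ × ℝ} (huw : u ≠ w)
    (hx : x ∈ segment ℝ u w) (hy : y ∈ segment ℝ u w)
    (hu : u ∈ segment ℝ x y) (hw : w ∈ segment ℝ x y) :
    (x = u ∧ y = w) ∨ (x = w ∧ y = u) := by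
  set d : ℝ × ℝ := w - u with hd
  have hdne : d ≠ 0 := sub_ne_zero.mpr (Ne.symm huw)
  have hcan : ∀ {s s' : ℝ}, s • d = s' • d → s = s' := by
    intro s s' h
    have : (s - s') • d = 0 := by rw [sub_smul, h, sub_self]
    rcases smul_eq_zero.mp this with h' | h'
    · linarith [sub_eq_zero.mp (by exact_mod_cast h')]
    · exact absurd h' hdne
  obtain ⟨a1, b1, ha1, hb1, hab1, hx'⟩ := hx
  obtain ⟨a2, b2, ha2, hb2, hab2, hy'⟩ := hy
  obtain ⟨c1, e1, hc1, he1, hce1, hu'⟩ := hu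
  obtain ⟨c2, e2, hc2, he2, hce2, hw'⟩ := hw
  have hx2 : x = u + b1 • d := by
    rw [← hx', hd]
    have : a1 = 1 - b1 := by linarith
    rw [this]; module
  have hy2 : y = u + b2 • d := by
    rw [← hy', hd]
    have : a2 = 1 - b2 := by linarith
    rw [this]; module
  have hwud : w = u + (1:ℝ) • d := by rw [hd]; module
  have hb1' : b1 ≤ 1 := by linarith
  have hb2' : b2 ≤ 1 := by linarith
  have hu2 : (c1 * b1 + e1 * b2) • d = (0:ℝ) • d := by
    have h2 : u + (c1 * b1 + e1 * b2) • d = u + (0:ℝ) • d := by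
      have : c1 • x + e1 • y = u + (c1 * b1 + e1 * b2) • d := by
        rw [hx2, hy2]
        have : c1 = 1 - e1 := by linarith
        rw [this]; module
      rw [← this, hu']; simp
    exact add_left_cancel h2
  have hw2 : (c2 * b1 + e2 * b2) • d = (1:ℝ) • d := by
    have h2 : u + (c2 * b1 + e2 * b2) • d = u + (1:ℝ) • d := by
      have : c2 • x + e2 • y = u + (c2 * b1 + e2 * b2) • d := by
        rw [hx2, hy2]
        have : c2 = 1 - e2 := by linarith
        rw [this]; module
      rw [← this, hw', hwud]
    exact add_left_cancel h2
  have h0 : c1 * b1 + e1 * b2 = 0 := hcan hu2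
  have h1 : c2 * b1 + e2 * b2 = 1 := hcan hw2
  have hcb : c1 * b1 = 0 ∧ e1 * b2 = 0 := by
    constructor <;> nlinarith [mul_nonneg hc1 hb1, mul_nonneg he1 hb2]
  by_cases hb10 : b1 = 0
  · left
    have hxu : x = u := by rw [hx2, hb10]; simp
    have hb21 : b2 = 1 := by
      have hle : e2 * b2 ≤ b2 := by nlinarith
      nlinarith
    have hyw : y = w := by rw [hy2, hb21, hwud]
    exact ⟨hxu, hyw⟩
  · right
    have hc10 : c1 = 0 := by
      rcases mul_eq_zero.mp hcb.1 with h | h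
      · exact h
      · exact absurd h hb10
    have he11 : e1 = 1 := by linarith
    have hb20 : b2 = 0 := by
      rcases mul_eq_zero.mp hcb.2 with h | h
      · linarith
      · exact h
    have hyu : y = u := by rw [hy2, hb20]; simp
    have hb11 : b1 = 1 := by
      have : c2 * b1 ≤ b1 := by nlinarith
      nlinarith
    have hxw : x = w := by rw [hx2, hb11, hwud]
    exact ⟨hxw, hyu⟩

lemma collinear_param {a b z : ℝ × ℝ} (hab : a ≠ b)
    (h : (b.1 - a.1) * (z.2 - a.2) - (b.2 - a.2) * (z.1 - a.1) = 0) :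
    ∃ t : ℝ, z = a + t • (b - a) := by
  by_cases h1 : b.1 - a.1 ≠ 0
  · refine ⟨(z.1 - a.1) / (b.1 - a.1), ?_⟩
    apply Prod.ext
    · show z.1 = a.1 + (z.1 - a.1) / (b.1 - a.1) * (b.1 - a.1)
      field_simp
      ring
    · show z.2 = a.2 + (z.1 - a.1) / (b.1 - a.1) * (b.2 - a.2)
      field_simp
      nlinarith [h]
  · push_neg at h1
    have h2 : b.2 - a.2 ≠ 0 := by
      intro h2
      apply hab
      have : b.1 = a.1 := by linarith
      have : b.2 = a.2 := by linarith
      exact Prod.ext (by linarith) (by linarith)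
    refine ⟨(z.2 - a.2) / (b.2 - a.2), ?_⟩
    apply Prod.ext
    · show z.1 = a.1 + (z.2 - a.2) / (b.2 - a.2) * (b.1 - a.1)
      rw [h1]
      have hprod : (b.2 - a.2) * (z.1 - a.1) = 0 := by
        rw [h1, zero_mul, zero_sub, neg_eq_zero] at h
        exact h
      have hz : z.1 - a.1 = 0 := by
        rcases mul_eq_zero.mp hprod with h' | h'
        · exact absurd h' h2
        · exact h'
      simp [mul_zero]
      linarith
    · show z.2 = a.2 + (z.2 - a.2) / (b.2 - a.2) * (b.2 - a.2)
      field_simp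
      ring

/-! ### The periodic setup -/

section Periodic

variable (σ τ0 τ1 : Equiv.Perm (Fin 3)) (i : ℕ → Fin 2) (p : ℕ)

def Gq : ℕ → M3 ℕ := fun m => Fn σ τ0 τ1 (i m)

def Gr : ℕ → M3 ℝ := fun m => Fmat σ τ0 τ1 (i m)

def Qp : M3 ℕ := ((List.range p).map (Gq σ τ0 τ1 i)).prod

def Xk (k : ℕ) : M3 ℝ := Bm * castM ((Qp σ τ0 τ1 i p)^k)

def Mr : M3 ℝ := Bm * castM (Qp σ τ0 τ1 i p) * Bm⁻¹

lemma castM_Gq (m : ℕ) : castM (Gq σ τ0 τ1 i m) = Gr σ τ0 τ1 i m := castM_Fn _ _ _ _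

lemma one_le_rsum_Gq_prod (l : List ℕ) :
    ∀ r, 1 ≤ rsum ((l.map (Gq σ τ0 τ1 i)).prod) r := by
  apply one_le_rsum_list_prod
  intro X hX
  obtain ⟨m, _, rfl⟩ := List.mem_map.mp hX
  exact one_le_rsum_Fn _ _ _ _

lemma one_le_csum_Gq_prod (l : List ℕ) :
    ∀ r, 1 ≤ csum ((l.map (Gq σ τ0 τ1 i)).prod) r := by
  apply one_le_csum_list_prod
  intro X hX
  obtain ⟨m, _, rfl⟩ := List.mem_map.mp hX
  exact one_le_csum_Fn _ _ _ _

lemma one_le_rsum_Qp : ∀ r, 1 ≤ rsum (Qp σ τ0 τ1 i p) r :=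
  one_le_rsum_Gq_prod σ τ0 τ1 i _

lemma one_le_csum_Qp : ∀ r, 1 ≤ csum (Qp σ τ0 τ1 i p) r :=
  one_le_csum_Gq_prod σ τ0 τ1 i _

lemma one_le_rsum_Qp_pow (k : ℕ) : ∀ r, 1 ≤ rsum ((Qp σ τ0 τ1 i p)^k) r := by
  induction k with
  | zero => simpa using one_le_rsum_one
  | succ k ih =>
      rw [pow_succ]
      exact one_le_rsum_mul ih (one_le_rsum_Qp σ τ0 τ1 i p)

lemma one_le_csum_Qp_pow (k : ℕ) : ∀ r, 1 ≤ csum ((Qp σ τ0 τ1 i p)^k) r := by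
  induction k with
  | zero => simpa using one_le_csum_one
  | succ k ih =>
      rw [pow_succ]
      exact one_le_csum_mul ih (one_le_csum_Qp σ τ0 τ1 i p)

lemma row0_cast (Y : M3 ℕ) (j : Fin 3) : (Bm * castM Y) 0 j = (csum Y j : ℝ) := by
  rw [Matrix.mul_apply, csum]
  push_cast
  rw [Fin.sum_univ_three, Fin.sum_univ_three]
  norm_num [Bm, castM_apply, Matrix.vecHead, Matrix.vecTail, Matrix.cons_val_two]

lemma Xk_row0 (k : ℕ) (j : Fin 3) :
    Xk σ τ0 τ1 i p k 0 j = (csum ((Qp σ τ0 τ1 i p)^k) j : ℝ) := row0_cast _ _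

lemma Xk_pos (k : ℕ) : ∀ j, 0 < Xk σ τ0 τ1 i p k 0 j := by
  intro j
  rw [Xk_row0]
  exact_mod_cast one_le_csum_Qp_pow σ τ0 τ1 i p k j

lemma Xk_zero : Xk σ τ0 τ1 i p 0 = Bm := by
  unfold Xk
  rw [pow_zero, castM_one, mul_one]

lemma Xk_succ (k : ℕ) : Xk σ τ0 τ1 i p (k+1) = Xk σ τ0 τ1 i p k * castM (Qp σ τ0 τ1 i p) := by
  unfold Xk
  rw [pow_succ, castM_mul, Matrix.mul_assoc]

lemma Mr_mul_Xk (k : ℕ) :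
    Mr σ τ0 τ1 i p * Xk σ τ0 τ1 i p k = Xk σ τ0 τ1 i p (k+1) := by
  unfold Mr Xk
  rw [Matrix.mul_assoc (Bm * castM (Qp σ τ0 τ1 i p)) Bm⁻¹ _,
    ← Matrix.mul_assoc Bm⁻¹ Bm _, Bm_inv_mul, Matrix.one_mul,
    Matrix.mul_assoc Bm _ _, ← castM_mul, ← pow_succ']

lemma Mr_pow_mul_Bm (k : ℕ) : (Mr σ τ0 τ1 i p)^k * Bm = Xk σ τ0 τ1 i p k := by
  induction k with
  | zero => rw [pow_zero, Matrix.one_mul, Xk_zero]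
  | succ k ih =>
      rw [pow_succ', Matrix.mul_assoc, ih, Mr_mul_Xk]

lemma tri_Xk_succ_subset (k : ℕ) :
    tri (Xk σ τ0 τ1 i p (k+1)) ⊆ tri (Xk σ τ0 τ1 i p k) := by
  rw [Xk_succ]
  apply tri_mul_subset _ _ (Xk_pos σ τ0 τ1 i p k)
  rw [← Xk_succ]
  exact Xk_pos σ τ0 τ1 i p (k+1)

lemma tri_Xk_antitone {k l : ℕ} (h : k ≤ l) :
    tri (Xk σ τ0 τ1 i p l) ⊆ tri (Xk σ τ0 τ1 i p k) := by
  induction l, h using Nat.le_induction with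
  | base => exact subset_rfl
  | succ l hl ih => exact (tri_Xk_succ_subset σ τ0 τ1 i p l).trans ih

/-! ### Relating `prodMat` to `Xk` -/

lemma prodMat_eq (n : ℕ) :
    prodMat (Gr σ τ0 τ1 i) n = Bm * castM (((List.range (n+1)).map (Gq σ τ0 τ1 i)).prod) := by
  unfold prodMat
  rw [castM_list_prod, List.map_map]
  congr 2
  apply List.map_congr_left
  intro m _
  exact (castM_Gq σ τ0 τ1 i m).symm

lemma prodMat_pos (n : ℕ) : ∀ j, 0 < prodMat (Gr σ τ0 τ1 i) n 0 j := by
  intro j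
  rw [prodMat_eq, row0_cast]
  exact_mod_cast one_le_csum_Gq_prod σ τ0 τ1 i _ j

lemma prodMat_succ (n : ℕ) :
    prodMat (Gr σ τ0 τ1 i) (n+1)
      = prodMat (Gr σ τ0 τ1 i) n * castM (Gq σ τ0 τ1 i (n+1)) := by
  rw [prodMat_eq, prodMat_eq, List.range_succ, List.map_append, List.prod_append,
    List.map_singleton, List.prod_singleton, castM_mul, Matrix.mul_assoc]

lemma tri_prodMat_antitone {n m : ℕ} (h : n ≤ m) :
    tri (prodMat (Gr σ τ0 τ1 i) m) ⊆ tri (prodMat (Gr σ τ0 τ1 i) n) := by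
  induction m, h using Nat.le_induction with
  | base => exact subset_rfl
  | succ m hm ih =>
      refine subset_trans ?_ ih
      rw [prodMat_succ]
      apply tri_mul_subset _ _ (prodMat_pos σ τ0 τ1 i m)
      rw [← prodMat_succ]
      exact prodMat_pos σ τ0 τ1 i (m+1)

lemma i_add_mul (hper : ∀ m, i (m + p) = i m) (k m : ℕ) : i (m + k*p) = i m := by
  induction k with
  | zero => simp
  | succ k ih =>
      have h1 : m + (k+1)*p = (m + k*p) + p := by ring
      rw [h1, hper, ih]

lemma prod_range_mul (hper : ∀ m, i (m + p) = i m) (k : ℕ) :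
    ((List.range (k*p)).map (Gq σ τ0 τ1 i)).prod = (Qp σ τ0 τ1 i p)^k := by
  induction k with
  | zero => simp
  | succ k ih =>
      have h1 : (k+1)*p = k*p + p := by ring
      rw [h1, List.range_add, List.map_append, List.prod_append, ih]
      have h2 : (List.map (fun x => k*p + x) (List.range p)).map (Gq σ τ0 τ1 i)
          = (List.range p).map (Gq σ τ0 τ1 i) := by
        rw [List.map_map]
        apply List.map_congr_left
        intro x _
        show Gq σ τ0 τ1 i (k*p + x) = Gq σ τ0 τ1 i x
        unfold Gq
        rw [Nat.add_comm, i_add_mul i p hper]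
      have h3 : (List.map (Gq σ τ0 τ1 i) (List.range p)).prod = Qp σ τ0 τ1 i p := rfl
      rw [h2, h3, ← pow_succ]

lemma prodMat_eq_Xk (hper : ∀ m, i (m + p) = i m) {k : ℕ} (hk : 1 ≤ k) (hp : 1 ≤ p) :
    prodMat (Gr σ τ0 τ1 i) (k*p - 1) = Xk σ τ0 τ1 i p k := by
  rw [prodMat_eq]
  have h1 : k*p - 1 + 1 = k*p := Nat.succ_pred_eq_of_pos (Nat.mul_pos hk hp)
  rw [h1, prod_range_mul σ τ0 τ1 i p hper]
  rfl

lemma DeltaInf_subset_Xk (hper : ∀ m, i (m + p) = i m) (hp : 1 ≤ p) (k : ℕ) :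
    DeltaInf (Gr σ τ0 τ1 i) ⊆ tri (Xk σ τ0 τ1 i p k) := by
  cases k with
  | zero =>
      rw [Xk_zero]
      refine (Set.iInter_subset _ 0).trans ?_
      have h0 : prodMat (Gr σ τ0 τ1 i) 0 = Bm * castM (Gq σ τ0 τ1 i 0) := by
        rw [prodMat_eq]
        rw [show (0:ℕ)+1 = 1 from rfl, List.range_succ, List.range_zero, List.nil_append, List.map_singleton, List.prod_singleton]
      rw [h0]
      apply tri_mul_subset _ _ Bm_pos_row0
      rw [← h0]
      exact prodMat_pos σ τ0 τ1 i 0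
  | succ k =>
      refine (Set.iInter_subset _ ((k+1)*p - 1)).trans ?_
      rw [prodMat_eq_Xk σ τ0 τ1 i p hper (Nat.succ_le_succ (Nat.zero_le k)) hp]

/-! ### Growth of the powers of `Qp` -/

lemma four_le_tsum_Qp (hp : 1 ≤ p) : 4 ≤ tsum (Qp σ τ0 τ1 i p) := by
  obtain ⟨p', rfl⟩ : ∃ p', p = p' + 1 := ⟨p - 1, by omega⟩
  unfold Qp
  rw [List.range_succ_eq_map, List.map_cons, List.prod_cons]
  have h4 : tsum (Gq σ τ0 τ1 i 0) = 4 := tsum_Fn _ _ _ _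
  rw [← h4]
  apply tsum_le_mul_right
  rw [List.map_map]
  apply one_le_rsum_list_prod
  intro X hX
  obtain ⟨m, _, rfl⟩ := List.mem_map.mp hX
  exact one_le_rsum_Fn _ _ _ _

lemma abs_det_castQp : |(castM (Qp σ τ0 τ1 i p)).det| = 1 := by
  unfold Qp
  rw [castM_list_prod, List.map_map]
  apply abs_det_list_prod
  intro X hX
  obtain ⟨m, _, rfl⟩ := List.mem_map.mp hX
  show |(castM (Gq σ τ0 τ1 i m)).det| = 1
  rw [castM_Gq]
  exact abs_det_Fmat _ _ _ _

lemma det_castQp_ne : (castM (Qp σ τ0 τ1 i p)).det ≠ 0 := by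
  have h := abs_det_castQp σ τ0 τ1 i p
  intro h0
  rw [h0] at h
  norm_num at h

lemma isUnit_det_Mr : IsUnit (Mr σ τ0 τ1 i p).det := by
  rw [Mr, Matrix.det_mul, Matrix.det_mul, Matrix.det_nonsing_inv, det_Bm]
  rw [isUnit_iff_ne_zero]
  simp only [one_mul, det_Bm]
  simpa using det_castQp_ne σ τ0 τ1 i p

lemma exists_big_entry (hp : 1 ≤ p) (c : ℕ) :
    ∃ k a b, c ≤ ((Qp σ τ0 τ1 i p)^k) a b := by
  by_contra hc
  push_neg at hc
  set Q := Qp σ τ0 τ1 i p with hQ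
  have hfin : ∃ a b, a ≠ b ∧
      (fun k => (fun x y => (⟨(Q^k) x y, hc k x y⟩ : Fin c))) a
        = (fun k => (fun x y => (⟨(Q^k) x y, hc k x y⟩ : Fin c))) b :=
    Finite.exists_ne_map_eq_of_infinite _
  obtain ⟨a, b, hne, heq⟩ := hfin
  have hQab : ∀ {a b : ℕ}, a < b →
      (fun x y => (⟨(Q^a) x y, hc a x y⟩ : Fin c)) = (fun x y => (⟨(Q^b) x y, hc b x y⟩ : Fin c))
      → False := by
    intro a b hab heq
    have hQeq : Q^a = Q^b := by
      ext x y
      have := congrFun (congrFun heq x) y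
      exact congrArg Fin.val this
    have hcast : (castM Q)^a = (castM Q)^b := by
      rw [← castM_pow, ← castM_pow, hQeq]
    have hunit : IsUnit ((castM Q)^a).det := by
      rw [isUnit_iff_ne_zero, Matrix.det_pow]
      exact pow_ne_zero _ (det_castQp_ne σ τ0 τ1 i p)
    have h1 : (castM Q)^(b-a) = 1 := by
      have h2 : (castM Q)^a * (castM Q)^(b-a) = (castM Q)^a * 1 := by
        rw [Matrix.mul_one, ← pow_add, Nat.add_sub_cancel' hab.le, ← hcast]
      have h3 := congrArg (fun Z => ((castM Q)^a)⁻¹ * Z) h2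
      simpa [← Matrix.mul_assoc, Matrix.nonsing_inv_mul _ hunit] using h3
    have h4 : Q^(b-a) = 1 := by
      apply castM_inj
      rw [castM_pow, castM_one, h1]
    have h5 : tsum (Q^(b-a)) = 3 := by rw [h4]; exact tsum_one
    have hd : 1 ≤ b - a := by omega
    have h6 : 4 ≤ tsum (Q^(b-a)) := by
      obtain ⟨d', hd'⟩ : ∃ d', b - a = d' + 1 := ⟨b - a - 1, by omega⟩
      rw [hd', pow_succ']
      calc (4:ℕ) ≤ tsum Q := four_le_tsum_Qp σ τ0 τ1 i p hp
      _ ≤ tsum (Q * Q^d') := tsum_le_mul_right (one_le_rsum_Qp_pow σ τ0 τ1 i p d')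
    omega
  rcases Nat.lt_or_ge a b with h | h
  · exact hQab h heq
  · have : b < a := by omega
    exact hQab this heq.symm

lemma exists_big_colprod (hp : 1 ≤ p) (c : ℕ) :
    ∃ k, c ≤ ∏ j, csum ((Qp σ τ0 τ1 i p)^k) j := by
  obtain ⟨k, a, b, hab⟩ := exists_big_entry σ τ0 τ1 i p hp c
  refine ⟨k, ?_⟩
  calc c ≤ ((Qp σ τ0 τ1 i p)^k) a b := hab
  _ ≤ csum ((Qp σ τ0 τ1 i p)^k) b := by
      rw [csum]
      exact Finset.single_le_sum (f := fun x => ((Qp σ τ0 τ1 i p)^k) x b) (fun x _ => Nat.zero_le _) (Finset.mem_univ a)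
  _ ≤ ∏ j, csum ((Qp σ τ0 τ1 i p)^k) j :=
      Finset.single_le_prod' (fun j _ => one_le_csum_Qp_pow σ τ0 τ1 i p k j) (Finset.mem_univ b)


/-! ### Dynamics of the projective map -/

lemma mulVec_apply3 (X : M3 ℝ) (s : Fin 3 → ℝ) (r : Fin 3) :
    (X *ᵥ s) r = ∑ j, X r j * s j := rfl

lemma step_c_pos {k : ℕ} {q : ℝ × ℝ} (hq : q ∈ tri (Xk σ τ0 τ1 i p k)) :
    0 < (Mr σ τ0 τ1 i p *ᵥ vc q) 0 ∧ Tf (Mr σ τ0 τ1 i p) q ∈ tri (Xk σ τ0 τ1 i p (k+1)) := by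
  rw [mem_tri_iff _ (Xk_pos σ τ0 τ1 i p k)] at hq
  obtain ⟨s, hs, h⟩ := hq
  have hMv : Mr σ τ0 τ1 i p *ᵥ vc q = Xk σ τ0 τ1 i p (k+1) *ᵥ s := by
    rw [← h, Matrix.mulVec_mulVec, Mr_mul_Xk]
  have h0 : (1:ℝ) = ∑ j, Xk σ τ0 τ1 i p k 0 j * s j := by
    have h0' := congrFun h 0
    rw [mulVec_apply3] at h0'
    rw [h0', vc0]
  have hj0 : ∃ j0, 0 < s j0 := by
    by_contra hcon
    push_neg at hcon
    have hz : ∀ j, s j = 0 := fun j => le_antisymm (hcon j) (hs j)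
    rw [Finset.sum_eq_zero (fun j _ => by rw [hz j, mul_zero])] at h0
    norm_num at h0
  obtain ⟨j0, hj0⟩ := hj0
  have hc : 0 < (Mr σ τ0 τ1 i p *ᵥ vc q) 0 := by
    rw [hMv, mulVec_apply3]
    exact Finset.sum_pos'
      (fun j _ => mul_nonneg (Xk_pos σ τ0 τ1 i p (k+1) j).le (hs j))
      ⟨j0, Finset.mem_univ j0, mul_pos (Xk_pos σ τ0 τ1 i p (k+1) j0) hj0⟩
  refine ⟨hc, ?_⟩
  rw [mem_tri_iff _ (Xk_pos σ τ0 τ1 i p (k+1))]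
  set c := (Mr σ τ0 τ1 i p *ᵥ vc q) 0 with hc_def
  have hspec := Tf_spec (Mr σ τ0 τ1 i p) q hc
  refine ⟨c⁻¹ • s, fun j => by
    simpa using mul_nonneg (inv_nonneg.mpr hc.le) (hs j), ?_⟩
  calc Xk σ τ0 τ1 i p (k+1) *ᵥ (c⁻¹ • s)
      = c⁻¹ • (Xk σ τ0 τ1 i p (k+1) *ᵥ s) := Matrix.mulVec_smul _ _ _
  _ = c⁻¹ • (Mr σ τ0 τ1 i p *ᵥ vc q) := by rw [hMv]
  _ = c⁻¹ • (c • vc (Tf (Mr σ τ0 τ1 i p) q)) := by rw [hspec, ← hc_def]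
  _ = vc (Tf (Mr σ τ0 τ1 i p) q) := by rw [smul_smul, inv_mul_cancel₀ hc.ne', one_smul]

lemma step_pre {k : ℕ} {q' : ℝ × ℝ} (hq' : q' ∈ tri (Xk σ τ0 τ1 i p (k+1))) :
    ∃ q, q ∈ tri (Xk σ τ0 τ1 i p k) ∧ Tf (Mr σ τ0 τ1 i p) q = q' := by
  rw [mem_tri_iff _ (Xk_pos σ τ0 τ1 i p (k+1))] at hq'
  obtain ⟨s, hs, h⟩ := hq'
  set v := Xk σ τ0 τ1 i p k *ᵥ s with hv
  have hv0nn : 0 ≤ v 0 := by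
    rw [hv, mulVec_apply3]
    exact Finset.sum_nonneg fun j _ => mul_nonneg (Xk_pos σ τ0 τ1 i p k j).le (hs j)
  have hv0ne : v 0 ≠ 0 := by
    intro h0
    have hsum0 : ∑ j, Xk σ τ0 τ1 i p k 0 j * s j = 0 := by
      rw [← mulVec_apply3, ← hv]
      exact h0
    have hz := (Finset.sum_eq_zero_iff_of_nonneg
      (fun j _ => mul_nonneg (Xk_pos σ τ0 τ1 i p k j).le (hs j))).mp hsum0
    have hs0 : ∀ j, s j = 0 := by
      intro j
      rcases mul_eq_zero.mp (hz j (Finset.mem_univ j)) with h' | h'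
      · exact absurd h' (Xk_pos σ τ0 τ1 i p k j).ne'
      · exact h'
    have hq0 : vc q' 0 = 0 := by
      rw [← h, mulVec_apply3]
      exact Finset.sum_eq_zero (fun j _ => by rw [hs0 j, mul_zero])
    simpa using hq0
  have hv0 : 0 < v 0 := lt_of_le_of_ne hv0nn (Ne.symm hv0ne)
  refine ⟨(v 1 / v 0, v 2 / v 0), ?_, ?_⟩
  · rw [mem_tri_iff _ (Xk_pos σ τ0 τ1 i p k)]
    refine ⟨(v 0)⁻¹ • s, fun j => by
      simpa using mul_nonneg (inv_nonneg.mpr hv0.le) (hs j), ?_⟩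
    rw [Matrix.mulVec_smul, ← hv]
    funext m
    fin_cases m
    · show (v 0)⁻¹ * v 0 = 1
      exact inv_mul_cancel₀ hv0.ne'
    · show (v 0)⁻¹ * v 1 = v 1 / v 0
      rw [div_eq_inv_mul]
    · show (v 0)⁻¹ * v 2 = v 2 / v 0
      rw [div_eq_inv_mul]
  · have hvq : vc ((v 1 / v 0, v 2 / v 0) : ℝ × ℝ) = (v 0)⁻¹ • v := by
      funext m
      fin_cases m
      · show (1:ℝ) = (v 0)⁻¹ * v 0
        rw [inv_mul_cancel₀ hv0.ne']
      · show v 1 / v 0 = (v 0)⁻¹ * v 1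
        rw [div_eq_inv_mul]
      · show v 2 / v 0 = (v 0)⁻¹ * v 2
        rw [div_eq_inv_mul]
    have hMq : Mr σ τ0 τ1 i p *ᵥ vc ((v 1 / v 0, v 2 / v 0) : ℝ × ℝ)
        = (v 0)⁻¹ • vc q' := by
      rw [hvq, Matrix.mulVec_smul, hv, Matrix.mulVec_mulVec, Mr_mul_Xk, h]
    have hne : (v 0)⁻¹ ≠ 0 := inv_ne_zero hv0.ne'
    unfold Tf
    rw [hMq]
    have h0 : ((v 0)⁻¹ • vc q') 0 = (v 0)⁻¹ * 1 := rfl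
    have h1 : ((v 0)⁻¹ • vc q') 1 = (v 0)⁻¹ * q'.1 := rfl
    have h2 : ((v 0)⁻¹ • vc q') 2 = (v 0)⁻¹ * q'.2 := rfl
    rw [h0, h1, h2, mul_one]
    apply Prod.ext
    · exact mul_div_cancel_left₀ _ hne
    · exact mul_div_cancel_left₀ _ hne

lemma Tf_inj {q q' : ℝ × ℝ} (hq : q ∈ tri (Xk σ τ0 τ1 i p 0))
    (hq' : q' ∈ tri (Xk σ τ0 τ1 i p 0))
    (h : Tf (Mr σ τ0 τ1 i p) q = Tf (Mr σ τ0 τ1 i p) q') : q = q' := by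
  have hc := (step_c_pos σ τ0 τ1 i p hq).1
  have hc' := (step_c_pos σ τ0 τ1 i p hq').1
  have hs := Tf_spec _ q hc
  have hs' := Tf_spec _ q' hc'
  rw [h] at hs
  set c := (Mr σ τ0 τ1 i p *ᵥ vc q) 0 with hcd
  set c' := (Mr σ τ0 τ1 i p *ᵥ vc q') 0 with hcd'
  have key : Mr σ τ0 τ1 i p *ᵥ (c' • vc q) = Mr σ τ0 τ1 i p *ᵥ (c • vc q') := by
    rw [Matrix.mulVec_smul, Matrix.mulVec_smul, hs, hs', smul_smul, smul_smul, mul_comm]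
  have heq := mulVec_cancel (isUnit_det_Mr σ τ0 τ1 i p) key
  have h00 : c' = c := by
    have h01 := congrFun heq 0
    have h02 : c' * 1 = c * 1 := h01
    simpa using h02
  have hvc : vc q = vc q' := by
    have h1 : c' • vc q = c' • vc q' := by rw [heq, h00]
    exact smul_right_injective _ hc'.ne' h1
  exact vc_inj hvc

lemma Tf_seg {u w z : ℝ × ℝ} (hu : u ∈ tri (Xk σ τ0 τ1 i p 0))
    (hw : w ∈ tri (Xk σ τ0 τ1 i p 0)) (hz : z ∈ segment ℝ u w) :
    Tf (Mr σ τ0 τ1 i p) z ∈ segment ℝ (Tf (Mr σ τ0 τ1 i p) u) (Tf (Mr σ τ0 τ1 i p) w) := by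
  obtain ⟨a, b, ha, hb, hab, hz'⟩ := hz
  have hcu := (step_c_pos σ τ0 τ1 i p hu).1
  have hcw := (step_c_pos σ τ0 τ1 i p hw).1
  set M := Mr σ τ0 τ1 i p with hM
  set cu := (M *ᵥ vc u) 0 with hcud
  set cw := (M *ᵥ vc w) 0 with hcwd
  have hvz : vc z = a • vc u + b • vc w := by
    funext m
    fin_cases m
    · show (1:ℝ) = a * 1 + b * 1
      rw [mul_one, mul_one, hab]
    · show z.1 = a * u.1 + b * w.1
      rw [← hz']
      simp [smul_eq_mul]
    · show z.2 = a * u.2 + b * w.2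
      rw [← hz']
      simp [smul_eq_mul]
  have hMz : M *ᵥ vc z = (a * cu) • vc (Tf M u) + (b * cw) • vc (Tf M w) := by
    rw [hvz, Matrix.mulVec_add, Matrix.mulVec_smul, Matrix.mulVec_smul,
      Tf_spec M u hcu, Tf_spec M w hcw, smul_smul, smul_smul, ← hcud, ← hcwd]
  have hcz : (M *ᵥ vc z) 0 = a * cu + b * cw := by
    rw [hMz]
    show a * cu * vc (Tf M u) 0 + b * cw * vc (Tf M w) 0 = a * cu + b * cw
    rw [vc0, vc0, mul_one, mul_one]
  have hczpos : 0 < (M *ᵥ vc z) 0 := by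
    rw [hcz]
    rcases lt_or_eq_of_le ha with h' | h'
    · have := mul_pos h' hcu
      have := mul_nonneg hb hcw.le
      linarith
    · have hb1 : b = 1 := by rw [← h'] at hab; linarith
      have := mul_nonneg ha hcu.le
      rw [hb1, one_mul]
      linarith
  have h1co : (M *ᵥ vc z) 1 = a * cu * (Tf M u).1 + b * cw * (Tf M w).1 := by
    rw [hMz]
    show a * cu * vc (Tf M u) 1 + b * cw * vc (Tf M w) 1 = _
    rw [vc1, vc1]
  have h2co : (M *ᵥ vc z) 2 = a * cu * (Tf M u).2 + b * cw * (Tf M w).2 := by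
    rw [hMz]
    show a * cu * vc (Tf M u) 2 + b * cw * vc (Tf M w) 2 = _
    rw [vc2, vc2]
  refine ⟨a * cu / ((M *ᵥ vc z) 0), b * cw / ((M *ᵥ vc z) 0),
    div_nonneg (mul_nonneg ha hcu.le) hczpos.le,
    div_nonneg (mul_nonneg hb hcw.le) hczpos.le, ?_, ?_⟩
  · rw [← add_div, hcz]
    exact div_self (by rw [← hcz]; exact hczpos.ne')
  · apply Prod.ext
    · show (a * cu / ((M *ᵥ vc z) 0)) * (Tf M u).1 + (b * cw / ((M *ᵥ vc z) 0)) * (Tf M w).1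
        = (M *ᵥ vc z) 1 / ((M *ᵥ vc z) 0)
      rw [h1co]
      field_simp
    · show (a * cu / ((M *ᵥ vc z) 0)) * (Tf M u).2 + (b * cw / ((M *ᵥ vc z) 0)) * (Tf M w).2
        = (M *ᵥ vc z) 2 / ((M *ᵥ vc z) 0)
      rw [h2co]
      field_simp

/-! ### Collinearity of the limit set -/

lemma cross_eq_zero (hp : 1 ≤ p) {a b z : ℝ × ℝ}
    (ha : ∀ k, a ∈ tri (Xk σ τ0 τ1 i p k)) (hb : ∀ k, b ∈ tri (Xk σ τ0 τ1 i p k))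
    (hz : ∀ k, z ∈ tri (Xk σ τ0 τ1 i p k)) :
    (b.1 - a.1) * (z.2 - a.2) - (b.2 - a.2) * (z.1 - a.1) = 0 := by
  by_contra hcr
  set cr := (b.1 - a.1) * (z.2 - a.2) - (b.2 - a.2) * (z.1 - a.1) with hcr_def
  have habs : 0 < |cr| := abs_pos.mpr hcr
  obtain ⟨c, hcgt⟩ := exists_nat_gt (6 / |cr|)
  obtain ⟨k, hk⟩ := exists_big_colprod σ τ0 τ1 i p hp c
  set X := Xk σ τ0 τ1 i p k with hXd
  have hXpos : ∀ j, 0 < X 0 j := Xk_pos σ τ0 τ1 i p k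
  obtain ⟨sa, hsa, hXa⟩ := (mem_tri_iff _ hXpos a).mp (ha k)
  obtain ⟨sb, hsb, hXb⟩ := (mem_tri_iff _ hXpos b).mp (hb k)
  obtain ⟨sz, hsz, hXz⟩ := (mem_tri_iff _ hXpos z).mp (hz k)
  have hbound : ∀ (s : Fin 3 → ℝ) (q : ℝ × ℝ), (∀ j, 0 ≤ s j) → X *ᵥ s = vc q →
      ∀ m, s m ≤ (X 0 m)⁻¹ := by
    intro s q hs hq m
    have h1 : ∑ j, X 0 j * s j = 1 := by
      have := congrFun hq 0
      rw [mulVec_apply3] at this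
      rw [this, vc0]
    have h2 : X 0 m * s m ≤ 1 := by
      rw [← h1]
      exact Finset.single_le_sum (f := fun j => X 0 j * s j)
        (fun j _ => mul_nonneg (hXpos j).le (hs j)) (Finset.mem_univ m)
    rw [← one_div, le_div_iff₀ (hXpos m)]
    calc s m * X 0 m = X 0 m * s m := mul_comm _ _
    _ ≤ 1 := h2
  set S : M3 ℝ := Matrix.of (fun r c' => ![sa r, sb r, sz r] c') with hSd
  have hScol : ∀ r, S r 0 = sa r ∧ S r 1 = sb r ∧ S r 2 = sz r := by
    intro r
    refine ⟨?_, ?_, ?_⟩ <;>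
      simp [hSd, Matrix.of_apply, Matrix.cons_val_zero, Matrix.cons_val_one, Matrix.head_cons,
        Matrix.cons_val_two, Matrix.tail_cons]
  have hXS : X * S = Matrix.of (fun r c' => ![vc a r, vc b r, vc z r] c') := by
    ext r c'
    rw [Matrix.mul_apply]
    fin_cases c'
    · show (∑ j, X r j * S j 0) = vc a r
      have he : (∑ j, X r j * S j 0) = (X *ᵥ sa) r := by
        rw [mulVec_apply3]
        exact Finset.sum_congr rfl (fun j _ => by rw [(hScol j).1])
      rw [he, hXa]
    · show (∑ j, X r j * S j 1) = vc b r
      have he : (∑ j, X r j * S j 1) = (X *ᵥ sb) r := by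
        rw [mulVec_apply3]
        exact Finset.sum_congr rfl (fun j _ => by rw [(hScol j).2.1])
      rw [he, hXb]
    · show (∑ j, X r j * S j 2) = vc z r
      have he : (∑ j, X r j * S j 2) = (X *ᵥ sz) r := by
        rw [mulVec_apply3]
        exact Finset.sum_congr rfl (fun j _ => by rw [(hScol j).2.2])
      rw [he, hXz]
  have hdetD : (X * S).det = cr := by
    rw [hXS, Matrix.det_fin_three]
    simp only [Matrix.of_apply, Matrix.cons_val_zero, Matrix.cons_val_one, Matrix.head_cons,
      Matrix.cons_val_two, Matrix.tail_cons, vc0, vc1, vc2]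
    rw [hcr_def]
    ring
  have hSnn : ∀ r c', 0 ≤ S r c' := by
    intro r c'
    fin_cases c'
    · show 0 ≤ S r 0
      rw [(hScol r).1]; exact hsa r
    · show 0 ≤ S r 1
      rw [(hScol r).2.1]; exact hsb r
    · show 0 ≤ S r 2
      rw [(hScol r).2.2]; exact hsz r
  have hSub : ∀ r c', S r c' ≤ (X 0 r)⁻¹ := by
    intro r c'
    fin_cases c'
    · show S r 0 ≤ (X 0 r)⁻¹
      rw [(hScol r).1]; exact hbound sa a hsa hXa r
    · show S r 1 ≤ (X 0 r)⁻¹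
      rw [(hScol r).2.1]; exact hbound sb b hsb hXb r
    · show S r 2 ≤ (X 0 r)⁻¹
      rw [(hScol r).2.2]; exact hbound sz z hsz hXz r
  set P3 := (X 0 0)⁻¹ * (X 0 1)⁻¹ * (X 0 2)⁻¹ with hP3d
  have hinv : ∀ m : Fin 3, 0 ≤ (X 0 m)⁻¹ := fun m => (inv_nonneg.mpr (hXpos m).le)
  have hterm : ∀ c1 c2 c3 : Fin 3,
      0 ≤ S 0 c1 * S 1 c2 * S 2 c3 ∧ S 0 c1 * S 1 c2 * S 2 c3 ≤ P3 := by
    intro c1 c2 c3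
    have n1 := hSnn 0 c1; have n2 := hSnn 1 c2; have n3 := hSnn 2 c3
    have u1 := hSub 0 c1; have u2 := hSub 1 c2; have u3 := hSub 2 c3
    constructor
    · positivity
    · rw [hP3d]
      apply mul_le_mul (mul_le_mul u1 u2 n2 (hinv 0)) u3 n3
        (mul_nonneg (hinv 0) (hinv 1))
  have hdetS : |S.det| ≤ 6 * P3 := by
    rw [Matrix.det_fin_three]
    have t1 := hterm 0 1 2
    have t2 := hterm 0 2 1
    have t3 := hterm 1 0 2
    have t4 := hterm 1 2 0
    have t5 := hterm 2 0 1
    have t6 := hterm 2 1 0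
    rw [abs_le]
    constructor <;> nlinarith [t1.1, t1.2, t2.1, t2.2, t3.1, t3.2, t4.1, t4.2, t5.1, t5.2,
      t6.1, t6.2]
  have hdetX : |X.det| = 1 := by
    rw [hXd]
    unfold Xk
    rw [Matrix.det_mul, abs_mul, det_Bm, abs_one, one_mul, castM_pow, Matrix.det_pow,
      abs_pow, abs_det_castQp, one_pow]
  have h1 : |cr| ≤ 6 * P3 := by
    calc |cr| = |(X * S).det| := by rw [hdetD]
    _ = |X.det| * |S.det| := by rw [Matrix.det_mul, abs_mul]
    _ = |S.det| := by rw [hdetX, one_mul]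
    _ ≤ 6 * P3 := hdetS
  have hprod_eq : ((∏ j, csum ((Qp σ τ0 τ1 i p)^k) j : ℕ) : ℝ) = X 0 0 * X 0 1 * X 0 2 := by
    push_cast
    rw [Fin.prod_univ_three, hXd]
    rw [Xk_row0, Xk_row0, Xk_row0]
  have hcle : (c : ℝ) ≤ X 0 0 * X 0 1 * X 0 2 := by
    rw [← hprod_eq]
    exact_mod_cast hk
  have hXp : 0 < X 0 0 * X 0 1 * X 0 2 :=
    mul_pos (mul_pos (hXpos 0) (hXpos 1)) (hXpos 2)
  have hc0 : (0:ℝ) < c := lt_of_le_of_lt (div_nonneg (by norm_num) habs.le) hcgt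
  have hP3eq : P3 = (X 0 0 * X 0 1 * X 0 2)⁻¹ := by
    rw [hP3d, mul_inv, mul_inv]
  have h2 : 6 * P3 ≤ 6 / (c:ℝ) := by
    rw [hP3eq, ← div_eq_mul_inv]
    apply div_le_div_of_nonneg_left (by norm_num) hc0 hcle
  have h3 : 6 / (c:ℝ) < |cr| := by
    rw [div_lt_iff₀ hc0]
    rw [div_lt_iff₀ habs] at hcgt
    linarith [mul_comm (c:ℝ) |cr|]
  linarith

end Periodic

end TripAux

open TripAux in
/-- Theorem 7.4 (eigenvector criterion): for a purely periodic digit sequence of period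
`p`, the intersection `Δ(i₀,i₁,…)` contains a line segment of positive length iff the
matrix `N = (B·F_{i₀}⋯F_{i_{p−1}}·B⁻¹)²` has two eigenvectors of the form `(1,p₁)ᵀ`,
`(1,p₂)ᵀ` with `p₁ ≠ p₂` lying in the closed triangle `{0 ≤ y ≤ x ≤ 1}`. -/
theorem segment_iff_two_eigenvectors
    (σ τ0 τ1 : Equiv.Perm (Fin 3)) (i : ℕ → Fin 2) (p : ℕ) (hp : 1 ≤ p)
    (hper : ∀ m, i (m + p) = i m) :
    (∃ q1 q2 : ℝ × ℝ, q1 ≠ q2 ∧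
        segment ℝ q1 q2 ⊆ DeltaInf (fun m => Fmat σ τ0 τ1 (i m))) ↔
    (∃ q1 q2 : ℝ × ℝ, q1 ≠ q2 ∧
        (0 ≤ q1.2 ∧ q1.2 ≤ q1.1 ∧ q1.1 ≤ 1) ∧ (0 ≤ q2.2 ∧ q2.2 ≤ q2.1 ∧ q2.1 ≤ 1) ∧
        ∃ l1 l2 : ℝ,
          ((Bm * ((List.range p).map (fun m => Fmat σ τ0 τ1 (i m))).prod * Bm⁻¹) ^ 2).mulVec
              ![1, q1.1, q1.2] = l1 • ![1, q1.1, q1.2] ∧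
          ((Bm * ((List.range p).map (fun m => Fmat σ τ0 τ1 (i m))).prod * Bm⁻¹) ^ 2).mulVec
              ![1, q2.1, q2.2] = l2 • ![1, q2.1, q2.2]) := by
  classical
  have hlp : ((List.range p).map (fun m => Fmat σ τ0 τ1 (i m))).prod = castM (Qp σ τ0 τ1 i p) := by
    unfold Qp
    rw [castM_list_prod, List.map_map]
    congr 1
    apply List.map_congr_left
    intro m _
    exact (castM_Gq σ τ0 τ1 i m).symm
  have hNr : Bm * ((List.range p).map (fun m => Fmat σ τ0 τ1 (i m))).prod * Bm⁻¹
      = Mr σ τ0 τ1 i p := by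
    rw [hlp]; rfl
  constructor
  · -- segment ⇒ eigenvectors
    rintro ⟨q1, q2, hne, hseg⟩
    have hsubK : ∀ k, DeltaInf (fun m => Fmat σ τ0 τ1 (i m)) ⊆ tri (Xk σ τ0 τ1 i p k) :=
      fun k => DeltaInf_subset_Xk σ τ0 τ1 i p hper hp k
    have hKa : ∀ k, q1 ∈ tri (Xk σ τ0 τ1 i p k) :=
      fun k => hsubK k (hseg (left_mem_segment ℝ q1 q2))
    have hKb : ∀ k, q2 ∈ tri (Xk σ τ0 τ1 i p k) :=
      fun k => hsubK k (hseg (right_mem_segment ℝ q1 q2))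
    set I : Set ℝ := {t | ∀ k, (q1 + t • (q2 - q1)) ∈ tri (Xk σ τ0 τ1 i p k)} with hI
    have h0I : (0:ℝ) ∈ I := by
      simp only [hI, Set.mem_setOf_eq]
      intro k
      rw [zero_smul, add_zero]
      exact hKa k
    have h1I : (1:ℝ) ∈ I := by
      simp only [hI, Set.mem_setOf_eq]
      intro k
      rw [one_smul, add_sub_cancel]
      exact hKb k
    have hIclosed : IsClosed I := by
      have hIeq : I = ⋂ k, (fun t : ℝ => q1 + t • (q2 - q1)) ⁻¹' (tri (Xk σ τ0 τ1 i p k)) := by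
        ext t
        simp only [hI, Set.mem_setOf_eq, Set.mem_iInter, Set.mem_preimage]
      rw [hIeq]
      exact isClosed_iInter (fun k => (tri_closed _).preimage (by fun_prop))
    have hbdd : ∃ C : ℝ, ∀ t ∈ I, |t| ≤ C := by
      have hq1B : 0 ≤ q1.2 ∧ q1.2 ≤ q1.1 ∧ q1.1 ≤ 1 := by
        have := hKa 0
        rw [Xk_zero, mem_tri_Bm] at this
        exact this
      by_cases h1 : q2.1 - q1.1 ≠ 0
      · refine ⟨2 / |q2.1 - q1.1|, fun t ht => ?_⟩
        have hmem := ht 0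
        rw [Xk_zero, mem_tri_Bm] at hmem
        have hco : (q1 + t • (q2 - q1)).1 = q1.1 + t * (q2.1 - q1.1) := by
          simp [smul_eq_mul]
        rw [hco] at hmem
        have h2 : |t * (q2.1 - q1.1)| ≤ 2 := by
          rw [abs_le]
          constructor <;> [nlinarith [hmem.1, hmem.2.1, hmem.2.2, hq1B.1, hq1B.2.1, hq1B.2.2];
            nlinarith [hmem.1, hmem.2.1, hmem.2.2, hq1B.1, hq1B.2.1, hq1B.2.2]]
        calc |t| = |t * (q2.1 - q1.1)| / |q2.1 - q1.1| := by
              rw [abs_mul, mul_div_cancel_right₀ _ (abs_ne_zero.mpr h1)]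
        _ ≤ 2 / |q2.1 - q1.1| := by gcongr
      · push_neg at h1
        have h2 : q2.2 - q1.2 ≠ 0 := by
          intro h2
          exact hne (Prod.ext (by linarith) (by linarith))
        refine ⟨2 / |q2.2 - q1.2|, fun t ht => ?_⟩
        have hmem := ht 0
        rw [Xk_zero, mem_tri_Bm] at hmem
        have hco : (q1 + t • (q2 - q1)).2 = q1.2 + t * (q2.2 - q1.2) := by
          simp [smul_eq_mul]
        have hco1 : (q1 + t • (q2 - q1)).1 = q1.1 + t * (q2.1 - q1.1) := by
          simp [smul_eq_mul]
        rw [hco] at hmem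
        have h3 : |t * (q2.2 - q1.2)| ≤ 2 := by
          rw [abs_le]
          constructor <;> [nlinarith [hmem.1, hmem.2.1, hmem.2.2, hq1B.1, hq1B.2.1, hq1B.2.2];
            nlinarith [hmem.1, hmem.2.1, hmem.2.2, hq1B.1, hq1B.2.1, hq1B.2.2, hco1]]
        calc |t| = |t * (q2.2 - q1.2)| / |q2.2 - q1.2| := by
              rw [abs_mul, mul_div_cancel_right₀ _ (abs_ne_zero.mpr h2)]
        _ ≤ 2 / |q2.2 - q1.2| := by gcongr
    obtain ⟨C, hC⟩ := hbdd
    have hBddB : BddBelow I := ⟨-C, fun t ht => (abs_le.mp (hC t ht)).1⟩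
    have hBddA : BddAbove I := ⟨C, fun t ht => (abs_le.mp (hC t ht)).2⟩
    have hInon : I.Nonempty := ⟨0, h0I⟩
    set α := sInf I with hαd
    set β := sSup I with hβd
    have hα : α ∈ I := IsClosed.csInf_mem hIclosed hInon hBddB
    have hβ : β ∈ I := IsClosed.csSup_mem hIclosed hInon hBddA
    have hα0 : α ≤ 0 := csInf_le hBddB h0I
    have h1β : 1 ≤ β := le_csSup hBddA h1I
    have hαβ : α < β := lt_of_le_of_lt hα0 (lt_of_lt_of_le one_pos h1β)
    set u := q1 + α • (q2 - q1) with hu_def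
    set w := q1 + β • (q2 - q1) with hw_def
    have hKu : ∀ k, u ∈ tri (Xk σ τ0 τ1 i p k) := fun k => hα k
    have hKw : ∀ k, w ∈ tri (Xk σ τ0 τ1 i p k) := fun k => hβ k
    have huw : u ≠ w := by
      intro h
      apply hαβ.ne
      have h2 : α • (q2 - q1) = β • (q2 - q1) := by
        have h3 := h
        rw [hu_def, hw_def] at h3
        exact add_left_cancel h3
      have h4 : (α - β) • (q2 - q1) = 0 := by rw [sub_smul, h2, sub_self]
      rcases smul_eq_zero.mp h4 with h' | h'
      · linarith [sub_eq_zero.mp h']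
      · exact absurd h' (sub_ne_zero.mpr (Ne.symm hne))
    have hKseg : ∀ z : ℝ × ℝ, (∀ k, z ∈ tri (Xk σ τ0 τ1 i p k)) → z ∈ segment ℝ u w := by
      intro z hzK
      have hcross := cross_eq_zero σ τ0 τ1 i p hp hKa hKb hzK
      obtain ⟨t, hzt⟩ := collinear_param hne hcross
      have htI : t ∈ I := by
        simp only [hI, Set.mem_setOf_eq]
        intro k
        rw [← hzt]
        exact hzK k
      have hαt : α ≤ t := csInf_le hBddB htI
      have htβ : t ≤ β := le_csSup hBddA htI
      have hβα : (0:ℝ) < β - α := by linarith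
      refine ⟨(β - t)/(β - α), (t - α)/(β - α), div_nonneg (by linarith) hβα.le,
        div_nonneg (by linarith) hβα.le, ?_, ?_⟩
      · rw [← add_div]
        field_simp
        ring
      · have hcmb : (β - t)/(β - α) * α + (t - α)/(β - α) * β = t := by
          field_simp
          ring
        have hsum : (β - t)/(β - α) + (t - α)/(β - α) = 1 := by
          rw [← add_div]
          field_simp
          ring
        rw [hu_def, hw_def, hzt]
        calc ((β - t)/(β - α)) • (q1 + α • (q2 - q1)) + ((t - α)/(β - α)) • (q1 + β • (q2 - q1))
            = ((β - t)/(β - α) + (t - α)/(β - α)) • q1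
              + ((β - t)/(β - α) * α + (t - α)/(β - α) * β) • (q2 - q1) := by module
        _ = q1 + t • (q2 - q1) := by rw [hsum, hcmb, one_smul]
    have hTuK : ∀ k, Tf (Mr σ τ0 τ1 i p) u ∈ tri (Xk σ τ0 τ1 i p k) := by
      intro k
      cases k with
      | zero => exact tri_Xk_succ_subset σ τ0 τ1 i p 0 (step_c_pos σ τ0 τ1 i p (hKu 0)).2
      | succ k => exact (step_c_pos σ τ0 τ1 i p (hKu k)).2
    have hTwK : ∀ k, Tf (Mr σ τ0 τ1 i p) w ∈ tri (Xk σ τ0 τ1 i p k) := by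
      intro k
      cases k with
      | zero => exact tri_Xk_succ_subset σ τ0 τ1 i p 0 (step_c_pos σ τ0 τ1 i p (hKw 0)).2
      | succ k => exact (step_c_pos σ τ0 τ1 i p (hKw k)).2
    have hTu_seg : Tf (Mr σ τ0 τ1 i p) u ∈ segment ℝ u w := hKseg _ hTuK
    have hTw_seg : Tf (Mr σ τ0 τ1 i p) w ∈ segment ℝ u w := hKseg _ hTwK
    have hpre : ∀ z : ℝ × ℝ, (∀ k, z ∈ tri (Xk σ τ0 τ1 i p k)) →
        ∃ y, (∀ k, y ∈ tri (Xk σ τ0 τ1 i p k)) ∧ Tf (Mr σ τ0 τ1 i p) y = z := by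
      intro z hzK
      have hex : ∀ k, ∃ y, y ∈ tri (Xk σ τ0 τ1 i p k) ∧ Tf (Mr σ τ0 τ1 i p) y = z :=
        fun k => step_pre σ τ0 τ1 i p (hzK (k+1))
      obtain ⟨y0, hy0, hy0T⟩ := hex 0
      refine ⟨y0, fun k => ?_, hy0T⟩
      obtain ⟨yk, hyk, hykT⟩ := hex k
      have heqy : yk = y0 :=
        Tf_inj σ τ0 τ1 i p (tri_Xk_antitone σ τ0 τ1 i p (Nat.zero_le k) hyk) hy0
          (by rw [hykT, hy0T])
      rw [← heqy]
      exact hyk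
    have hu_seg : u ∈ segment ℝ (Tf (Mr σ τ0 τ1 i p) u) (Tf (Mr σ τ0 τ1 i p) w) := by
      obtain ⟨y, hyK, hyT⟩ := hpre u hKu
      have h := Tf_seg σ τ0 τ1 i p (hKu 0) (hKw 0) (hKseg y hyK)
      rw [hyT] at h
      exact h
    have hw_seg : w ∈ segment ℝ (Tf (Mr σ τ0 τ1 i p) u) (Tf (Mr σ τ0 τ1 i p) w) := by
      obtain ⟨y, hyK, hyT⟩ := hpre w hKw
      have h := Tf_seg σ τ0 τ1 i p (hKu 0) (hKw 0) (hKseg y hyK)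
      rw [hyT] at h
      exact h
    have hdi := seg_endpoints huw hTu_seg hTw_seg hu_seg hw_seg
    have hcu := (step_c_pos σ τ0 τ1 i p (hKu 0)).1
    have hcw := (step_c_pos σ τ0 τ1 i p (hKw 0)).1
    set cu := (Mr σ τ0 τ1 i p *ᵥ vc u) 0 with hcud
    set cw := (Mr σ τ0 τ1 i p *ᵥ vc w) 0 with hcwd
    have hsu : Mr σ τ0 τ1 i p *ᵥ vc u = cu • vc (Tf (Mr σ τ0 τ1 i p) u) := Tf_spec _ u hcu
    have hsw : Mr σ τ0 τ1 i p *ᵥ vc w = cw • vc (Tf (Mr σ τ0 τ1 i p) w) := Tf_spec _ w hcw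
    have huB := hKu 0
    have hwB := hKw 0
    rw [Xk_zero, mem_tri_Bm] at huB hwB
    refine ⟨u, w, huw, huB, hwB, ?_⟩
    rcases hdi with ⟨h1, h2⟩ | ⟨h1, h2⟩
    · rw [h1] at hsu
      rw [h2] at hsw
      refine ⟨cu * cu, cw * cw, ?_, ?_⟩
      · rw [hNr]
        show (Mr σ τ0 τ1 i p ^ 2) *ᵥ vc u = (cu * cu) • vc u
        rw [pow_two, ← Matrix.mulVec_mulVec, hsu, Matrix.mulVec_smul, hsu, smul_smul]
      · rw [hNr]
        show (Mr σ τ0 τ1 i p ^ 2) *ᵥ vc w = (cw * cw) • vc w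
        rw [pow_two, ← Matrix.mulVec_mulVec, hsw, Matrix.mulVec_smul, hsw, smul_smul]
    · rw [h1] at hsu
      rw [h2] at hsw
      refine ⟨cu * cw, cw * cu, ?_, ?_⟩
      · rw [hNr]
        show (Mr σ τ0 τ1 i p ^ 2) *ᵥ vc u = (cu * cw) • vc u
        rw [pow_two, ← Matrix.mulVec_mulVec, hsu, Matrix.mulVec_smul, hsw, smul_smul]
      · rw [hNr]
        show (Mr σ τ0 τ1 i p ^ 2) *ᵥ vc w = (cw * cu) • vc w
        rw [pow_two, ← Matrix.mulVec_mulVec, hsw, Matrix.mulVec_smul, hsu, smul_smul]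
  · -- eigenvectors ⇒ segment
    rintro ⟨q1, q2, hne, hq1in, hq2in, l1, l2, hE1, hE2⟩
    refine ⟨q1, q2, hne, ?_⟩
    rw [hNr] at hE1 hE2
    have hmem : ∀ (q : ℝ × ℝ) (l : ℝ), (0 ≤ q.2 ∧ q.2 ≤ q.1 ∧ q.1 ≤ 1) →
        ((Mr σ τ0 τ1 i p) ^ 2).mulVec (vc q) = l • vc q →
        ∀ k, q ∈ tri (Xk σ τ0 τ1 i p (2*k)) := by
      intro q l hineq hE k
      have hMdet : IsUnit ((Mr σ τ0 τ1 i p) ^ 2).det := by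
        rw [Matrix.det_pow]
        exact (isUnit_det_Mr σ τ0 τ1 i p).pow 2
      have hl0 : l ≠ 0 := by
        intro h0
        rw [h0, zero_smul] at hE
        have hz : vc q = 0 := mulVec_cancel hMdet (by rw [hE, Matrix.mulVec_zero])
        have := congrFun hz 0
        simpa using this
      have hiter : ∀ k, ((Mr σ τ0 τ1 i p) ^ (2*k)) *ᵥ vc q = (l^k) • vc q := by
        intro k
        induction k with
        | zero => simp [Matrix.one_mulVec]
        | succ k ih =>
            have h2 : 2*(k+1) = 2*k + 2 := by ring
            rw [h2, pow_add, ← Matrix.mulVec_mulVec, hE, Matrix.mulVec_smul, ih, smul_smul,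
              ← pow_succ']
      have hqB : q ∈ tri Bm := (mem_tri_Bm q).mpr hineq
      rw [mem_tri_iff Bm Bm_pos_row0] at hqB
      obtain ⟨s, hs, hBs⟩ := hqB
      have hXks : ∀ k, Xk σ τ0 τ1 i p (2*k) *ᵥ s = (l^k) • vc q := by
        intro k
        rw [← Mr_pow_mul_Bm, ← Matrix.mulVec_mulVec, hBs, hiter]
      have hl1pos : 0 < l := by
        have h1 := hXks 1
        have h0 := congrFun h1 0
        rw [mulVec_apply3] at h0
        have hge : 0 ≤ ∑ j, Xk σ τ0 τ1 i p (2*1) 0 j * s j :=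
          Finset.sum_nonneg fun j _ => mul_nonneg (Xk_pos σ τ0 τ1 i p (2*1) j).le (hs j)
        have hl1 : (l^1 • vc q) 0 = l := by simp
        rw [hl1] at h0
        rcases lt_or_eq_of_le (h0 ▸ hge) with h' | h'
        · exact h'
        · exact absurd h'.symm hl0
      have hlk : 0 < l^k := pow_pos hl1pos k
      rw [mem_tri_iff _ (Xk_pos σ τ0 τ1 i p (2*k))]
      refine ⟨(l^k)⁻¹ • s, fun j => by
        simpa using mul_nonneg (inv_nonneg.mpr hlk.le) (hs j), ?_⟩
      rw [Matrix.mulVec_smul, hXks, smul_smul, inv_mul_cancel₀ hlk.ne', one_smul]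
    have hmem1 := hmem q1 l1 hq1in hE1
    have hmem2 := hmem q2 l2 hq2in hE2
    have hsub2 : ∀ q : ℝ × ℝ, (∀ k, q ∈ tri (Xk σ τ0 τ1 i p (2*k))) →
        ∀ n, q ∈ tri (prodMat (fun m => Fmat σ τ0 τ1 (i m)) n) := by
      intro q hq n
      have hk := hq (n+1)
      have heq := prodMat_eq_Xk σ τ0 τ1 i p hper (k := 2*(n+1)) (by omega) hp
      have hle : n ≤ 2*(n+1)*p - 1 := by
        have h2 : 2*(n+1) ≤ 2*(n+1)*p := Nat.le_mul_of_pos_right _ hp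
        omega
      refine tri_prodMat_antitone σ τ0 τ1 i hle ?_
      show q ∈ tri (prodMat (Gr σ τ0 τ1 i) (2*(n+1)*p - 1))
      rw [heq]
      exact hk
    intro z hz
    rw [DeltaInf, Set.mem_iInter]
    intro n
    exact (convex_convexHull ℝ _).segment_subset (hsub2 q1 hmem1 n) (hsub2 q2 hmem2 n) hz
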